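/- Define i_* : Mod R → Mod oFF_Λ R by (i_*V)(λ)=0 for λ∈Λ and (i_*V)(∞)=V; let j^* : Mod oFF_Λ R → Mod FF_Λ R be restriction along the inclusion j : FF_Λ R → oFF_Λ R; define j_* : Mod FF_Λ R → Mod oFF_Λ R by (j_*M)(λ)=M(λ) for λ∈Λ and (j_*M)(∞)=0; and define i^! : Mod oFF_Λ R → Mod R by i^!(M)=M(∞). Then these functors fit into a recollement of abelian categories: j^* admits a left adjoint j_! and the right adjoint j_*, with j_! and j_* fully faithful; i_* is fully faithful and admits a left adjoint i^* and the right adjoint i^!; and the essential image of i_* equals the full subcategory of those M in Mod oFF_Λ R with j^*(M) = 0. -/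

import Mathlib

set_option linter.unusedSectionVars false
set_option maxHeartbeats 1000000
set_option synthInstance.maxHeartbeats 1000000
set_option maxHeartbeats 2000000

noncomputable section

open CategoryTheory CategoryTheory.Limits

universe u

namespace GliderPaper

/-- A `Γ`-filtration `FR` on a unital ring `R`: additive subgroups `F γ` with
`1 ∈ F 1`, monotone in `γ`, and multiplicative. -/
structure RingFiltration (Γ : Type u) [Group Γ] [PartialOrder Γ] (R : Type u) [Ring R] where
  F : Γ → AddSubgroup R
  one_mem : (1 : R) ∈ F 1
  mono : ∀ {α β : Γ}, α ≤ β → F α ≤ F β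
  mul_mem : ∀ {α β : Γ} {a b : R}, a ∈ F α → b ∈ F β → a * b ∈ F (α * β)

variable {Γ : Type u} [Group Γ] [PartialOrder Γ]
  [CovariantClass Γ Γ (· * ·) (· ≤ ·)] [CovariantClass Γ Γ (Function.swap (· * ·)) (· ≤ ·)]
  {R : Type u} [Ring R]

/-- Objects of the extended filtered companion category `oFF_Λ R`:
the disjoint union `Λ ⊔ {∞}`. -/
inductive OFF (FR : RingFiltration Γ R) (Λ : Set Γ) : Type u
  | of (α : Λ)
  | infty

/-- Objects of the filtered companion category `FF_Λ R`: the set `Λ`. -/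
inductive FF (FR : RingFiltration Γ R) (Λ : Set Γ) : Type u
  | of (α : Λ)

variable (FR : RingFiltration Γ R) (Λ : Set Γ)

namespace OFF

/-- `le X Y` holds iff the canonical morphism `1_{X,Y}` is defined, i.e. `X ≤ Y` in `Λ`,
or `Y = ∞`. -/
def le : OFF FR Λ → OFF FR Λ → Prop
  | of α, of β => (α : Γ) ≤ (β : Γ)
  | _, infty => True
  | infty, of _ => False

open scoped Classical in
/-- The additive subgroup of `R` of morphisms `X ⟶ Y` in `oFF_Λ R`:
`Hom(α,β) = F_{βα⁻¹}R` for `α ≤ β` in `Λ`, `Hom(X,∞) = R`, and `0` otherwise. -/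
noncomputable def homGrp : OFF FR Λ → OFF FR Λ → AddSubgroup R
  | of α, of β => if (α : Γ) ≤ (β : Γ) then FR.F ((β : Γ) * (α : Γ)⁻¹) else ⊥
  | _, infty => ⊤
  | infty, of _ => ⊥

theorem le_refl' : ∀ X : OFF FR Λ, le FR Λ X X
  | of _ => _root_.le_refl _
  | infty => trivial

theorem one_mem_homGrp : ∀ {X Y : OFF FR Λ}, le FR Λ X Y → (1 : R) ∈ homGrp FR Λ X Y
  | of α, of β, h => by
      have h' : (α : Γ) ≤ (β : Γ) := h
      have h1 : (1 : Γ) ≤ (β : Γ) * (α : Γ)⁻¹ := by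
        rw [← mul_inv_cancel (α : Γ)]
        exact mul_le_mul_left h' _
      simpa [homGrp, if_pos h'] using FR.mono h1 FR.one_mem
  | of _, infty, _ => trivial
  | infty, infty, _ => trivial
  | infty, of _, h => h.elim

theorem mul_mem_homGrp : ∀ {X Y Z : OFF FR Λ} {f g : R},
    f ∈ homGrp FR Λ X Y → g ∈ homGrp FR Λ Y Z → g * f ∈ homGrp FR Λ X Z := by
  intro X Y Z f g hf hg
  cases X <;> cases Y <;> cases Z <;> simp only [homGrp] at hf hg ⊢ <;> try trivial
  case of.of.of a b c =>
    by_cases hab : (a : Γ) ≤ (b : Γ)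
    · by_cases hbc : (b : Γ) ≤ (c : Γ)
      · rw [if_pos hab] at hf
        rw [if_pos hbc] at hg
        rw [if_pos (le_trans hab hbc)]
        have := FR.mul_mem hg hf
        rwa [show (c : Γ) * (b : Γ)⁻¹ * ((b : Γ) * (a : Γ)⁻¹) = (c : Γ) * (a : Γ)⁻¹ by
          group] at this
      · rw [if_neg hbc] at hg
        rw [AddSubgroup.mem_bot] at hg
        subst hg
        simp only [zero_mul]
        exact AddSubgroup.zero_mem _
    · rw [if_neg hab] at hf
      rw [AddSubgroup.mem_bot] at hf
      subst hf
      simp only [mul_zero]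
      exact AddSubgroup.zero_mem _
  case of.infty.of a c =>
    rw [AddSubgroup.mem_bot] at hg
    subst hg
    simp only [zero_mul]
    exact AddSubgroup.zero_mem _
  case infty.of.of b c =>
    rw [AddSubgroup.mem_bot] at hf
    subst hf
    simp only [mul_zero]
    exact AddSubgroup.zero_mem _
  case infty.infty.of c =>
    rw [AddSubgroup.mem_bot] at hg
    subst hg
    simp only [zero_mul]
    exact AddSubgroup.zero_mem _

instance : Category (OFF FR Λ) where
  Hom X Y := homGrp FR Λ X Y
  id X := ⟨1, one_mem_homGrp FR Λ (le_refl' FR Λ X)⟩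
  comp f g := ⟨g.1 * f.1, mul_mem_homGrp FR Λ f.2 g.2⟩
  id_comp f := Subtype.ext (mul_one f.1)
  comp_id f := Subtype.ext (one_mul f.1)
  assoc f g h := Subtype.ext (mul_assoc h.1 g.1 f.1).symm

instance : Preadditive (OFF FR Λ) where
  homGroup X Y := inferInstanceAs (AddCommGroup (homGrp FR Λ X Y))
  add_comp _ _ _ f f' g := Subtype.ext (mul_add g.1 f.1 f'.1)
  comp_add _ _ _ f g g' := Subtype.ext (add_mul g.1 g'.1 f.1)

end OFF

namespace FF

/-- The inclusion of the objects of `FF_Λ R` into those of `oFF_Λ R`. -/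
def toOFF : FF FR Λ → OFF FR Λ
  | of α => .of α

instance : Category (FF FR Λ) where
  Hom X Y := OFF.homGrp FR Λ (toOFF FR Λ X) (toOFF FR Λ Y)
  id X := ⟨1, OFF.one_mem_homGrp FR Λ (OFF.le_refl' FR Λ _)⟩
  comp f g := ⟨g.1 * f.1, OFF.mul_mem_homGrp FR Λ f.2 g.2⟩
  id_comp f := Subtype.ext (mul_one f.1)
  comp_id f := Subtype.ext (one_mul f.1)
  assoc f g h := Subtype.ext (mul_assoc h.1 g.1 f.1).symm

instance : Preadditive (FF FR Λ) where
  homGroup X Y := inferInstanceAs (AddCommGroup (OFF.homGrp FR Λ (toOFF FR Λ X) (toOFF FR Λ Y)))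
  add_comp _ _ _ f f' g := Subtype.ext (mul_add g.1 f.1 f'.1)
  comp_add _ _ _ f g g' := Subtype.ext (add_mul g.1 g'.1 f.1)

end FF

/-- The inclusion functor `j : FF_Λ R ⥤ oFF_Λ R`. -/
def jF : FF FR Λ ⥤ OFF FR Λ where
  obj := FF.toOFF FR Λ
  map f := f
  map_id _ := rfl
  map_comp _ _ := rfl

instance : (jF FR Λ).Additive := ⟨rfl⟩

/-- `Mod C`: the category of additive functors from `C` to abelian groups. -/
abbrev Mod (C : Type u) [Category.{u} C] [Preadditive C] : Type (u + 1) :=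
  C ⥤+ AddCommGrpCat.{u}

/-- The component at `X` of a morphism in `Mod C`. -/
def mapp {C : Type u} [Category.{u} C] [Preadditive C] {M N : Mod C} (f : M ⟶ N) (X : C) :
    M.obj.obj X ⟶ N.obj.obj X :=
  f.hom.app X

/-- The canonical morphism `1_{X,Y}` in `oFF_Λ R`, given by `1_R`. -/
def unitHom (X Y : OFF FR Λ) (h : OFF.le FR Λ X Y) : X ⟶ Y :=
  ⟨1, OFF.one_mem_homGrp FR Λ h⟩

/-- The canonical morphism `1_{α,β}` in `FF_Λ R`, given by `1_R`. -/
def unitHomFF (α β : Λ) (h : (α : Γ) ≤ (β : Γ)) : (FF.of α : FF FR Λ) ⟶ FF.of β :=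
  unitHom FR Λ (.of α) (.of β) h

/-- A module `M` over `oFF_Λ R` is a preglider if all the maps `M(1_{X,Y})` are injective. -/
def IsPreglider (M : Mod (OFF FR Λ)) : Prop :=
  ∀ (X Y : OFF FR Λ) (h : OFF.le FR Λ X Y), Function.Injective (M.obj.map (unitHom FR Λ X Y h))

/-- A module `M` over `FF_Λ R` is a prefragment if all the maps `M(1_{α,β})` are injective. -/
def IsPrefragment (M : Mod (FF FR Λ)) : Prop :=
  ∀ (α β : Λ) (h : (α : Γ) ≤ (β : Γ)), Function.Injective (M.obj.map (unitHomFF FR Λ α β h))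

/-- The category of pregliders: the full subcategory of `Mod (oFF_Λ R)` of pregliders. -/
abbrev Preglid : Type (u + 1) :=
  ObjectProperty.FullSubcategory (fun M : Mod (OFF FR Λ) => IsPreglider FR Λ M)

instance : Preadditive (Preglid FR Λ) := Preadditive.fullSubcategory _

/-- The category of prefragments: the full subcategory of `Mod (FF_Λ R)` of prefragments. -/
abbrev Prefrag : Type (u + 1) :=
  ObjectProperty.FullSubcategory (fun M : Mod (FF FR Λ) => IsPrefragment FR Λ M)

instance : Preadditive (Prefrag FR Λ) := Preadditive.fullSubcategory _

/-- The inclusion `Preglid FR Λ ⥤ Mod (oFF_Λ R)`. -/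
def iotaF : Preglid FR Λ ⥤ Mod (OFF FR Λ) := ObjectProperty.ι _

/-- The inclusion `Prefrag FR Λ ⥤ Mod (FF_Λ R)`. -/
def etaF : Prefrag FR Λ ⥤ Mod (FF FR Λ) := ObjectProperty.ι _

/-- The component at `X` of a morphism of pregliders. -/
def pgapp {M N : Preglid FR Λ} (f : M ⟶ N) (X : OFF FR Λ) :
    M.obj.obj.obj X ⟶ N.obj.obj.obj X :=
  mapp f.hom X

/-- The component at `X` of a morphism of prefragments. -/
def pfapp {M N : Prefrag FR Λ} (f : M ⟶ N) (X : FF FR Λ) :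
    M.obj.obj.obj X ⟶ N.obj.obj.obj X :=
  mapp f.hom X

/-- The class `Σ` of morphisms of pregliders all of whose components at objects of `Λ`
are isomorphisms. -/
def SigmaClass : MorphismProperty (Preglid FR Λ) :=
  fun _ _ f => ∀ α : Λ, IsIso (pgapp FR Λ f (.of α))

/-- The category of glider representations: the localization of `Preglid FR Λ` at `Σ`. -/
abbrev Glid : Type (u + 1) := (SigmaClass FR Λ).Localization

/-- The localization functor `Q : Preglid FR Λ ⥤ Glid FR Λ`. -/
def QF : Preglid FR Λ ⥤ Glid FR Λ := (SigmaClass FR Λ).Q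

/-- The restriction functor `j^* : Mod (oFF_Λ R) ⥤ Mod (FF_Λ R)`. -/
def jStar : Mod (OFF FR Λ) ⥤ Mod (FF FR Λ) where
  obj M := ⟨jF FR Λ ⋙ M.obj, by haveI : M.obj.Additive := M.property; exact (inferInstance : (jF FR Λ ⋙ M.obj).Additive)⟩
  map {M N} f := ⟨Functor.whiskerLeft (jF FR Λ) f.hom⟩
  map_id _ := rfl
  map_comp _ _ := rfl

theorem isPrefragment_jStar (M : Mod (OFF FR Λ)) (hM : IsPreglider FR Λ M) :
    IsPrefragment FR Λ ((jStar FR Λ).obj M) :=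
  fun α β h => hM (.of α) (.of β) h

/-- The restriction functor `j^* : Preglid FR Λ ⥤ Prefrag FR Λ`. -/
def jRes : Preglid FR Λ ⥤ Prefrag FR Λ where
  obj M := ⟨(jStar FR Λ).obj M.obj, isPrefragment_jStar FR Λ M.obj M.property⟩
  map f := ⟨(jStar FR Λ).map f.hom⟩
  map_id M := rfl
  map_comp f g := rfl

theorem sigma_isInvertedBy : (SigmaClass FR Λ).IsInvertedBy (jRes FR Λ) := by
  intro M N f hf
  haveI : (AdditiveFunctor.forget (FF FR Λ) AddCommGrpCat.{u}).Faithful :=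
    inferInstance
  haveI : ∀ X : FF FR Λ, IsIso
      (((ObjectProperty.ι (fun M : Mod (FF FR Λ) => IsPrefragment FR Λ M) ⋙
        AdditiveFunctor.forget _ _).map ((jRes FR Λ).map f)).app X) := by
    rintro ⟨α⟩
    exact hf α
  haveI : IsIso ((ObjectProperty.ι (fun M : Mod (FF FR Λ) => IsPrefragment FR Λ M) ⋙
      AdditiveFunctor.forget _ _).map ((jRes FR Λ).map f)) :=
    NatIso.isIso_of_isIso_app _
  exact isIso_of_reflects_iso ((jRes FR Λ).map f)
    (ObjectProperty.ι (fun M : Mod (FF FR Λ) => IsPrefragment FR Λ M) ⋙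
      AdditiveFunctor.forget _ _)

/-- The canonical fully faithful functor `φ : Glid FR Λ ⥤ Prefrag FR Λ`,
the unique functor with `Q ⋙ φ = j^*`. -/
def phiF : Glid FR Λ ⥤ Prefrag FR Λ :=
  Localization.Construction.lift (jRes FR Λ) (sigma_isInvertedBy FR Λ)

theorem phiF_fac : QF FR Λ ⋙ phiF FR Λ = jRes FR Λ :=
  Localization.Construction.fac _ _


section RecollementAux

/-! ### Generalities on `AddCommGrpCat` homs with trivial source/target -/

theorem hom_ext_src {A B : AddCommGrpCat.{u}} (hA : ∀ x y : A, x = y) (f g : A ⟶ B) : f = g :=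
  AddCommGrpCat.ext fun x => by rw [hA x 0, map_zero, map_zero]

theorem hom_ext_tgt {A B : AddCommGrpCat.{u}} (hB : ∀ x y : B, x = y) (f g : A ⟶ B) : f = g :=
  AddCommGrpCat.ext fun x => hB _ _

/-- The zero object of `AddCommGrpCat` we use. -/
def ZG : AddCommGrpCat.{u} := AddCommGrpCat.of PUnit

instance : Subsingleton (ZG : AddCommGrpCat.{u}) := inferInstanceAs (Subsingleton PUnit)

theorem ZG_sub : ∀ x y : (ZG : AddCommGrpCat.{u}), x = y := fun _ _ =>
  Subsingleton.elim _ _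

theorem ZG_isZero : IsZero (ZG : AddCommGrpCat.{u}) :=
  AddCommGrpCat.isZero_of_subsingleton _

/-! ### Canonical morphisms in `OFF` -/

/-- The morphism `∞ ⟶ ∞` given by `r : R`. -/
def infHom (r : R) : (OFF.infty : OFF FR Λ) ⟶ OFF.infty :=
  ⟨r, AddSubgroup.mem_top r⟩

/-- The morphism `of α ⟶ ∞` given by `r : R`. -/
def ofToInf (α : Λ) (r : R) : (OFF.of α : OFF FR Λ) ⟶ OFF.infty :=
  ⟨r, AddSubgroup.mem_top r⟩

theorem infty_to_of_eq_zero {β : Λ} (f : (OFF.infty : OFF FR Λ) ⟶ OFF.of β) : f = 0 :=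
  Subtype.ext (AddSubgroup.mem_bot.mp f.2)

theorem infHom_eq (f : (OFF.infty : OFF FR Λ) ⟶ OFF.infty) : infHom FR Λ f.1 = f :=
  Subtype.ext rfl

theorem ofToInf_eq {α : Λ} (f : (OFF.of α : OFF FR Λ) ⟶ OFF.infty) : ofToInf FR Λ α f.1 = f :=
  Subtype.ext rfl

/-! ### The functor `i_*` -/

/-- Scalar multiplication as a morphism in `AddCommGrpCat`. -/
def smulHom (V : ModuleCat.{u} R) (r : R) : AddCommGrpCat.of V ⟶ AddCommGrpCat.of V :=
  AddCommGrpCat.ofHom (AddMonoidHom.mk' (fun v : V => r • v) fun a b => smul_add r a b)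

@[simp] theorem smulHom_apply (V : ModuleCat.{u} R) (r : R) (v : V) :
    smulHom V r v = r • v := rfl

/-- The underlying functor of `i_* V`. -/
def istarObjFun (V : ModuleCat.{u} R) : OFF FR Λ ⥤ AddCommGrpCat.{u} where
  obj X := match X with
    | .of _ => ZG
    | .infty => AddCommGrpCat.of V
  map {X Y} f := match X, Y, f with
    | .of _, .of _, _ => 0
    | .of _, .infty, _ => 0
    | .infty, .of _, _ => 0
    | .infty, .infty, f => smulHom V f.1
  map_id X := by
    cases X with
    | of α => exact hom_ext_tgt ZG_sub _ _
    | infty =>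
        show smulHom V ((𝟙 (OFF.infty : OFF FR Λ) : _ ⟶ _).1) = 𝟙 (AddCommGrpCat.of V)
        refine AddCommGrpCat.ext fun (v : V) => ?_
        show ((𝟙 (OFF.infty : OFF FR Λ) : _ ⟶ _).1 : R) • v = v
        exact one_smul R v
  map_comp {X Y Z} f g := by
    cases X <;> cases Y <;> cases Z
    case of.of.of => exact hom_ext_tgt ZG_sub _ _
    case of.of.infty => exact hom_ext_src ZG_sub _ _
    case of.infty.of => exact hom_ext_tgt ZG_sub _ _
    case of.infty.infty => exact hom_ext_src ZG_sub _ _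
    case infty.of.of => exact hom_ext_tgt ZG_sub _ _
    case infty.of.infty =>
      have hf : (f.1 : R) = 0 := AddSubgroup.mem_bot.mp f.2
      show smulHom V ((f ≫ g).1) = (0 : AddCommGrpCat.of V ⟶ ZG) ≫ (0 : ZG ⟶ AddCommGrpCat.of V)
      refine AddCommGrpCat.ext fun (v : V) => ?_
      show ((f ≫ g).1 : R) • v = ((0 : AddCommGrpCat.of V ⟶ ZG) ≫ (0 : ZG ⟶ AddCommGrpCat.of V)) v
      rw [show ((f ≫ g).1 : R) = g.1 * f.1 from rfl, hf, mul_zero, zero_smul]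
      rfl
    case infty.infty.of => exact hom_ext_tgt ZG_sub _ _
    case infty.infty.infty =>
      show smulHom V ((f ≫ g).1) = smulHom V f.1 ≫ smulHom V g.1
      refine AddCommGrpCat.ext fun (v : V) => ?_
      show ((f ≫ g).1 : R) • v = (g.1 : R) • ((f.1 : R) • v)
      rw [show ((f ≫ g).1 : R) = g.1 * f.1 from rfl, mul_smul]

theorem istarObjFun_additive (V : ModuleCat.{u} R) : (istarObjFun FR Λ V).Additive := by
  constructor
  intro X Y f g
  cases X <;> cases Y
  case of.of => exact hom_ext_tgt ZG_sub _ _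
  case of.infty => exact hom_ext_src ZG_sub _ _
  case infty.of => exact hom_ext_tgt ZG_sub _ _
  case infty.infty =>
    show smulHom V ((f + g).1) = smulHom V f.1 + smulHom V g.1
    refine AddCommGrpCat.ext fun (v : V) => ?_
    show ((f + g).1 : R) • v = (f.1 : R) • v + (g.1 : R) • v
    rw [show ((f + g).1 : R) = f.1 + g.1 from rfl, add_smul]

/-- The functor `i_* : Mod R ⥤ Mod (oFF_Λ R)`. -/
def istarF : ModuleCat.{u} R ⥤ Mod (OFF FR Λ) where
  obj V := ⟨istarObjFun FR Λ V, istarObjFun_additive FR Λ V⟩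
  map {V W} φ :=
    ObjectProperty.homMk <| show istarObjFun FR Λ V ⟶ istarObjFun FR Λ W from
    { app := fun X => match X with
        | .of _ => 0
        | .infty => AddCommGrpCat.ofHom φ.hom.toAddMonoidHom
      naturality := by
        intro X Y f
        cases X <;> cases Y
        case of.of => exact hom_ext_tgt ZG_sub _ _
        case of.infty => exact hom_ext_src ZG_sub _ _
        case infty.of => exact hom_ext_tgt ZG_sub _ _
        case infty.infty =>
          show smulHom V f.1 ≫ AddCommGrpCat.ofHom φ.hom.toAddMonoidHom =
            AddCommGrpCat.ofHom φ.hom.toAddMonoidHom ≫ smulHom W f.1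
          refine AddCommGrpCat.ext fun (v : V) => ?_
          show φ ((f.1 : R) • v) = (f.1 : R) • φ v
          exact map_smul φ.hom f.1 v }
  map_id V := by
    refine ObjectProperty.hom_ext _ (NatTrans.ext (funext fun X => ?_))
    cases X with
    | of α => exact hom_ext_tgt ZG_sub _ _
    | infty => rfl
  map_comp f g := by
    refine ObjectProperty.hom_ext _ (NatTrans.ext (funext fun X => ?_))
    cases X with
    | of α => exact hom_ext_tgt ZG_sub _ _
    | infty => rfl

/-! ### The functor `i^!` -/

instance minfSMul (M : Mod (OFF FR Λ)) : SMul R (M.obj.obj OFF.infty) :=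
  ⟨fun r m => M.obj.map (infHom FR Λ r) m⟩

theorem minf_smul_def (M : Mod (OFF FR Λ)) (r : R) (m : M.obj.obj OFF.infty) :
    r • m = M.obj.map (infHom FR Λ r) m := rfl

instance minfModule (M : Mod (OFF FR Λ)) : Module R (M.obj.obj OFF.infty) where
  one_smul m := by
    rw [minf_smul_def, show infHom FR Λ (1 : R) = 𝟙 (OFF.infty : OFF FR Λ) from Subtype.ext rfl,
      M.obj.map_id]
    rfl
  mul_smul r s m := by
    rw [minf_smul_def, minf_smul_def, minf_smul_def,
      show infHom FR Λ (r * s) = infHom FR Λ s ≫ infHom FR Λ r from Subtype.ext rfl,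
      M.obj.map_comp]
    rfl
  smul_zero r := map_zero _
  smul_add r a b := map_add _ a b
  add_smul r s m := by
    haveI := M.property
    rw [minf_smul_def, minf_smul_def, minf_smul_def,
      show infHom FR Λ (r + s) = infHom FR Λ r + infHom FR Λ s from Subtype.ext rfl,
      M.obj.map_add]
    rfl
  zero_smul m := by
    haveI := M.property
    rw [minf_smul_def, show infHom FR Λ (0 : R) = 0 from Subtype.ext rfl,
      M.obj.map_zero]
    rfl

theorem app_inf_smul {M N : Mod (OFF FR Λ)} (φ : M.obj ⟶ N.obj) (r : R)
    (m : M.obj.obj OFF.infty) :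
    φ.app OFF.infty (r • m) = r • φ.app OFF.infty m := by
  rw [minf_smul_def, minf_smul_def]
  have h := ConcreteCategory.congr_hom (φ.naturality (infHom FR Λ r)) m
  simp only [comp_apply] at h
  exact h

/-- The functor `i^! : Mod (oFF_Λ R) ⥤ Mod R`, `M ↦ M(∞)`. -/
def iupperF : Mod (OFF FR Λ) ⥤ ModuleCat.{u} R where
  obj M := ModuleCat.of R (M.obj.obj OFF.infty)
  map {M N} φ := ModuleCat.ofHom
    { toFun := φ.hom.app OFF.infty
      map_add' := map_add _
      map_smul' := fun r m => app_inf_smul FR Λ φ.hom r m }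
  map_id M := rfl
  map_comp f g := rfl

/-! ### The adjunction `i_* ⊣ i^!` and full faithfulness of `i_*` -/

/-- From an `R`-linear map `V ⟶ M(∞)`, a natural transformation `i_* V ⟶ M`. -/
def istarTrans {V : ModuleCat.{u} R} {M : Mod (OFF FR Λ)}
    (ψ : V →ₗ[R] (M.obj.obj OFF.infty)) : istarObjFun FR Λ V ⟶ M.obj where
  app X := match X with
    | .of _ => 0
    | .infty => AddCommGrpCat.ofHom ψ.toAddMonoidHom
  naturality {X Y} f := by
    cases X <;> cases Y
    case of.of => exact hom_ext_src ZG_sub _ _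
    case of.infty => exact hom_ext_src ZG_sub _ _
    case infty.of =>
      haveI := M.property
      rw [show f = 0 from infty_to_of_eq_zero FR Λ f]
      rw [show (istarObjFun FR Λ V).map (0 : (OFF.infty : OFF FR Λ) ⟶ OFF.of _) =
        (0 : AddCommGrpCat.of V ⟶ ZG) from hom_ext_tgt ZG_sub _ _, M.obj.map_zero]
      exact Limits.zero_comp.trans Limits.comp_zero.symm
    case infty.infty =>
      refine AddCommGrpCat.ext fun (v : V) => ?_
      show ψ ((f.1 : R) • v) = M.obj.map f (ψ v)
      rw [map_smul, minf_smul_def, infHom_eq]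

theorem istarTrans_additive {V : ModuleCat.{u} R} {M : Mod (OFF FR Λ)}
    (ψ ψ' : V →ₗ[R] (M.obj.obj OFF.infty)) :
    istarTrans FR Λ (ψ + ψ') = istarTrans FR Λ ψ + istarTrans FR Λ ψ' := by
  refine NatTrans.ext (funext fun X => ?_)
  cases X with
  | of α => exact hom_ext_src ZG_sub _ _
  | infty => rfl

/-- The adjunction `i_* ⊣ i^!`. -/
def istarIupperAdj : istarF FR Λ ⊣ iupperF FR Λ :=
  Adjunction.mkOfHomEquiv
    { homEquiv := fun V M =>
      { toFun := fun θ => ModuleCat.ofHom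
          { toFun := fun v => θ.hom.app OFF.infty v
            map_add' := map_add (θ.hom.app OFF.infty).hom
            map_smul' := fun r v => by
              have h := ConcreteCategory.congr_hom
                (θ.hom.naturality (infHom FR Λ r)) v
              exact h }
        invFun := fun ψ => ObjectProperty.homMk (istarTrans FR Λ (M := M) ψ.hom)
        left_inv := fun θ => by
          refine ObjectProperty.hom_ext _ (NatTrans.ext (funext fun X => ?_))
          cases X with
          | of α => exact hom_ext_src ZG_sub _ _
          | infty => rfl
        right_inv := fun ψ => rfl }
      homEquiv_naturality_left_symm := fun {V' V M} f g => by
        refine ObjectProperty.hom_ext _ (NatTrans.ext (funext fun X => ?_))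
        cases X with
        | of α => exact hom_ext_src ZG_sub _ _
        | infty => rfl
      homEquiv_naturality_right := fun {V M M'} g φ => rfl }

instance istarF_faithful : (istarF FR Λ).Faithful where
  map_injective {V W} f g h := by
    have h2 := congrArg (fun (θ : (istarF FR Λ).obj V ⟶ (istarF FR Λ).obj W) =>
      θ.hom.app OFF.infty) h
    refine ModuleCat.hom_ext (LinearMap.ext fun v => ?_)
    exact ConcreteCategory.congr_hom h2 v

instance istarF_full : (istarF FR Λ).Full where
  map_surjective {V W} θ := by
    refine ⟨ModuleCat.ofHom
            { toFun := fun v => θ.hom.app OFF.infty v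
              map_add' := map_add (θ.hom.app OFF.infty).hom
              map_smul' := fun r v => ?_ }, ?_⟩
    · have h := ConcreteCategory.congr_hom (θ.hom.naturality (infHom FR Λ r)) v
      exact h
    · refine ObjectProperty.hom_ext _ (NatTrans.ext (funext fun X => ?_))
      cases X with
      | of α => exact hom_ext_src ZG_sub _ _
      | infty => rfl
/-! ### The functor `i^*` -/

/-- The submodule of `M(∞)` generated by the images of all `M(g)`, `g : α ⟶ ∞`. -/
def lamSub (M : Mod (OFF FR Λ)) : Submodule R (M.obj.obj OFF.infty) :=
  Submodule.span R {m | ∃ (α : Λ) (g : (OFF.of α : OFF FR Λ) ⟶ OFF.infty)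
    (x : M.obj.obj (OFF.of α)), M.obj.map g x = m}

/-- The `∞`-component of a morphism, as a linear map. -/
def infLinear {M N : Mod (OFF FR Λ)} (φ : M ⟶ N) :
    M.obj.obj OFF.infty →ₗ[R] N.obj.obj OFF.infty where
  toFun := φ.hom.app OFF.infty
  map_add' := map_add _
  map_smul' r m := app_inf_smul FR Λ φ.hom r m

theorem lamSub_le_comap {M N : Mod (OFF FR Λ)} (φ : M ⟶ N) :
    lamSub FR Λ M ≤ Submodule.comap (infLinear FR Λ φ) (lamSub FR Λ N) := by
  rw [lamSub, Submodule.span_le]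
  rintro m ⟨α, g, x, rfl⟩
  have h := ConcreteCategory.congr_hom (φ.hom.naturality g) x
  simp only [comp_apply] at h
  refine Submodule.mem_comap.mpr (Submodule.subset_span ?_)
  exact ⟨α, g, φ.hom.app (OFF.of α) x, h.symm⟩

/-- The functor `i^* : Mod (oFF_Λ R) ⥤ Mod R`. -/
def istarLF : Mod (OFF FR Λ) ⥤ ModuleCat.{u} R where
  obj M := ModuleCat.of R ((M.obj.obj OFF.infty) ⧸ lamSub FR Λ M)
  map {M N} φ := ModuleCat.ofHom <| Submodule.mapQ (lamSub FR Λ M) (lamSub FR Λ N) (infLinear FR Λ φ)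
    (lamSub_le_comap FR Λ φ)
  map_id M := by
    refine ModuleCat.hom_ext (Submodule.linearMap_qext _ ?_)
    refine LinearMap.ext fun x => ?_
    simp [Submodule.mapQ_apply]
    rfl
  map_comp f g := by
    refine ModuleCat.hom_ext (Submodule.linearMap_qext _ ?_)
    refine LinearMap.ext fun x => ?_
    simp [Submodule.mapQ_apply]
    rfl

/-- From a linear map `M(∞)/N ⟶ V`, a natural transformation `M ⟶ i_* V`. -/
def istarLTrans {M : Mod (OFF FR Λ)} {V : ModuleCat.{u} R}
    (ψ : ((M.obj.obj OFF.infty) ⧸ lamSub FR Λ M) →ₗ[R] V) :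
    M.obj ⟶ istarObjFun FR Λ V where
  app X := match X with
    | .of _ => 0
    | .infty => AddCommGrpCat.ofHom (ψ.comp (lamSub FR Λ M).mkQ).toAddMonoidHom
  naturality {X Y} f := by
    cases X <;> cases Y
    case of.of => exact hom_ext_tgt ZG_sub _ _
    case infty.of => exact hom_ext_tgt ZG_sub _ _
    case of.infty α =>
      refine AddCommGrpCat.ext fun x => ?_
      show ψ (Submodule.Quotient.mk (M.obj.map f x)) =
        (0 : ZG ⟶ AddCommGrpCat.of V) ((0 : M.obj.obj (OFF.of α) ⟶ ZG) x)
      have hm : M.obj.map f x ∈ lamSub FR Λ M :=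
        Submodule.subset_span ⟨_, f, x, rfl⟩
      rw [(Submodule.Quotient.mk_eq_zero _).mpr hm, map_zero]
      rfl
    case infty.infty =>
      refine AddCommGrpCat.ext fun m => ?_
      show ψ (Submodule.Quotient.mk (M.obj.map f m)) = (f.1 : R) • ψ (Submodule.Quotient.mk m)
      have hsm : M.obj.map f m = (f.1 : R) • m := by rw [minf_smul_def, infHom_eq]
      rw [hsm, Submodule.Quotient.mk_smul, map_smul]

/-- The `∞`-component of a natural transformation `M ⟶ i_* V`, as a linear map. -/
def istarLCoTrans {M : Mod (OFF FR Λ)} {V : ModuleCat.{u} R}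
    (θ : M.obj ⟶ istarObjFun FR Λ V) :
    (M.obj.obj OFF.infty) →ₗ[R] V where
  toFun := θ.app OFF.infty
  map_add' := map_add _
  map_smul' r m := by
    have h := ConcreteCategory.congr_hom (θ.naturality (infHom FR Λ r)) m
    simp only [comp_apply] at h
    rw [minf_smul_def]
    exact h

theorem lamSub_le_ker {M : Mod (OFF FR Λ)} {V : ModuleCat.{u} R}
    (θ : M.obj ⟶ istarObjFun FR Λ V) :
    lamSub FR Λ M ≤ LinearMap.ker (istarLCoTrans FR Λ θ) := by
  rw [lamSub, Submodule.span_le]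
  rintro m ⟨α, g, x, rfl⟩
  refine LinearMap.mem_ker.mpr ?_
  exact ConcreteCategory.congr_hom (θ.naturality g) x

/-- The adjunction `i^* ⊣ i_*`. -/
def istarLAdj : istarLF FR Λ ⊣ istarF FR Λ :=
  Adjunction.mkOfHomEquiv
    { homEquiv := fun M V =>
      { toFun := fun ψ => show M ⟶ (istarF FR Λ).obj V from ObjectProperty.homMk (istarLTrans FR Λ ψ.hom)
        invFun := fun θ => ModuleCat.ofHom <| (lamSub FR Λ M).liftQ
          (istarLCoTrans FR Λ θ.hom)
          (lamSub_le_ker FR Λ _)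
        left_inv := fun ψ => by
          refine ModuleCat.hom_ext (Submodule.linearMap_qext _ ?_)
          refine LinearMap.ext fun x => ?_
          rfl
        right_inv := fun θ => by
          refine ObjectProperty.hom_ext _ (NatTrans.ext (funext fun X => ?_))
          cases X with
          | of α => exact hom_ext_tgt ZG_sub _ _
          | infty => rfl }
      homEquiv_naturality_left_symm := fun {M' M V} f g => by
        refine ModuleCat.hom_ext (Submodule.linearMap_qext _ ?_)
        refine LinearMap.ext fun x => ?_
        rfl
      homEquiv_naturality_right := fun {M V V'} g φ => by
        refine ObjectProperty.hom_ext _ (NatTrans.ext (funext fun X => ?_))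
        cases X with
        | of α => exact hom_ext_tgt ZG_sub _ _
        | infty => rfl }
/-! ### The functor `j_*` -/

/-- Reinterpret a morphism of `OFF` between objects of `Λ` as a morphism of `FF`. -/
def ffOf {α β : Λ} (f : (OFF.of α : OFF FR Λ) ⟶ OFF.of β) :
    (FF.of α : FF FR Λ) ⟶ FF.of β := f

/-- Reinterpret a morphism of `FF` as a morphism of `OFF`. -/
def offOf {α β : Λ} (f : (FF.of α : FF FR Λ) ⟶ FF.of β) :
    (OFF.of α : OFF FR Λ) ⟶ OFF.of β := f

theorem ffOf_id (α : Λ) : ffOf FR Λ (𝟙 (OFF.of α : OFF FR Λ)) = 𝟙 (FF.of α : FF FR Λ) := rfl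

theorem ffOf_comp {α β γ : Λ} (f : (OFF.of α : OFF FR Λ) ⟶ OFF.of β)
    (g : (OFF.of β : OFF FR Λ) ⟶ OFF.of γ) :
    ffOf FR Λ (f ≫ g) = ffOf FR Λ f ≫ ffOf FR Λ g := rfl

theorem ffOf_add {α β : Λ} (f g : (OFF.of α : OFF FR Λ) ⟶ OFF.of β) :
    ffOf FR Λ (f + g) = ffOf FR Λ f + ffOf FR Λ g := rfl

/-- The underlying functor of `j_* N`. -/
def jupperObjFun (N : Mod (FF FR Λ)) : OFF FR Λ ⥤ AddCommGrpCat.{u} where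
  obj X := match X with
    | .of α => N.obj.obj (FF.of α)
    | .infty => ZG
  map {X Y} f := match X, Y, f with
    | .of _, .of _, f => N.obj.map (ffOf FR Λ f)
    | .of _, .infty, _ => 0
    | .infty, .of _, _ => 0
    | .infty, .infty, _ => 0
  map_id X := by
    cases X with
    | of α =>
        show N.obj.map (ffOf FR Λ (𝟙 (OFF.of α : OFF FR Λ))) = 𝟙 (N.obj.obj (FF.of α))
        rw [ffOf_id, N.obj.map_id]
    | infty => exact hom_ext_tgt ZG_sub _ _
  map_comp {X Y Z} f g := by
    cases X <;> cases Y <;> cases Z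
    case of.of.of =>
      show N.obj.map (ffOf FR Λ (f ≫ g)) = N.obj.map (ffOf FR Λ f) ≫ N.obj.map (ffOf FR Λ g)
      rw [ffOf_comp, N.obj.map_comp]
    case of.of.infty => exact hom_ext_tgt ZG_sub _ _
    case of.infty.of =>
      haveI := N.property
      have hfg : f ≫ g = 0 := by
        rw [show g = 0 from infty_to_of_eq_zero FR Λ g, comp_zero]
      show N.obj.map (ffOf FR Λ (f ≫ g)) = (0 : _ ⟶ ZG) ≫ (0 : ZG ⟶ _)
      rw [hfg, show ffOf FR Λ (0 : (OFF.of _ : OFF FR Λ) ⟶ OFF.of _) = 0 from rfl,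
        N.obj.map_zero, Limits.zero_comp]
    case of.infty.infty => exact hom_ext_tgt ZG_sub _ _
    case infty.of.of => exact hom_ext_src ZG_sub _ _
    case infty.of.infty => exact hom_ext_tgt ZG_sub _ _
    case infty.infty.of => exact hom_ext_src ZG_sub _ _
    case infty.infty.infty => exact hom_ext_tgt ZG_sub _ _

theorem jupperObjFun_additive (N : Mod (FF FR Λ)) : (jupperObjFun FR Λ N).Additive := by
  haveI := N.property
  constructor
  intro X Y f g
  cases X <;> cases Y
  case of.of =>
    show N.obj.map (ffOf FR Λ (f + g)) = N.obj.map (ffOf FR Λ f) + N.obj.map (ffOf FR Λ g)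
    rw [ffOf_add, N.obj.map_add]
  case of.infty => exact hom_ext_tgt ZG_sub _ _
  case infty.of => exact hom_ext_src ZG_sub _ _
  case infty.infty => exact hom_ext_tgt ZG_sub _ _

/-- The functor `j_* : Mod (FF_Λ R) ⥤ Mod (oFF_Λ R)`. -/
def jupperF : Mod (FF FR Λ) ⥤ Mod (OFF FR Λ) where
  obj N := ⟨jupperObjFun FR Λ N, jupperObjFun_additive FR Λ N⟩
  map {N N'} ψ :=
    ObjectProperty.homMk <| show jupperObjFun FR Λ N ⟶ jupperObjFun FR Λ N' from
    { app := fun X => match X with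
        | .of α => ψ.hom.app (FF.of α)
        | .infty => 0
      naturality := by
        intro X Y f
        cases X <;> cases Y
        case of.of => exact ψ.hom.naturality (ffOf FR Λ f)
        case of.infty => exact hom_ext_tgt ZG_sub _ _
        case infty.of => exact hom_ext_src ZG_sub _ _
        case infty.infty => exact hom_ext_tgt ZG_sub _ _ }
  map_id N := by
    refine ObjectProperty.hom_ext _ (NatTrans.ext (funext fun X => ?_))
    cases X with
    | of α => rfl
    | infty => exact hom_ext_tgt ZG_sub _ _
  map_comp f g := by
    refine ObjectProperty.hom_ext _ (NatTrans.ext (funext fun X => ?_))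
    cases X with
    | of α => rfl
    | infty => exact hom_ext_tgt ZG_sub _ _

/-- The adjunction `j^* ⊣ j_*`. -/
def jStarJupperAdj : jStar FR Λ ⊣ jupperF FR Λ :=
  Adjunction.mkOfHomEquiv
    { homEquiv := fun M N =>
      { toFun := fun η =>
          ObjectProperty.homMk <| show M.obj ⟶ jupperObjFun FR Λ N from
          { app := fun X => match X with
              | .of α => η.hom.app (FF.of α)
              | .infty => 0
            naturality := by
              intro X Y f
              cases X <;> cases Y
              case of.of =>
                exact η.hom.naturality (ffOf FR Λ f)
              case of.infty => exact hom_ext_tgt ZG_sub _ _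
              case infty.of β =>
                haveI := M.property
                refine AddCommGrpCat.ext fun x => ?_
                show η.hom.app (FF.of β)
                  (M.obj.map f x) =
                  (0 : ZG ⟶ N.obj.obj (FF.of β)) ((0 : M.obj.obj OFF.infty ⟶ ZG) x)
                rw [show f = 0 from infty_to_of_eq_zero FR Λ f, M.obj.map_zero,
                  AddCommGrpCat.zero_apply]
                exact (map_zero (η.hom.app (FF.of β)).hom).trans (AddCommGrpCat.zero_apply _ _ _).symm
              case infty.infty => exact hom_ext_tgt ZG_sub _ _ }
        invFun := fun θ =>
          show (jStar FR Λ).obj M ⟶ N from ObjectProperty.homMk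
          { app := fun X => match X with
              | FF.of α => θ.hom.app (OFF.of α)
            naturality := by
              rintro ⟨α⟩ ⟨β⟩ f
              exact θ.hom.naturality (offOf FR Λ f) }
        left_inv := fun η => by
          refine ObjectProperty.hom_ext _ (NatTrans.ext (funext fun X => ?_))
          rcases X with ⟨α⟩
          rfl
        right_inv := fun θ => by
          refine ObjectProperty.hom_ext _ (NatTrans.ext (funext fun X => ?_))
          cases X with
          | of α => rfl
          | infty => exact hom_ext_tgt ZG_sub _ _ }
      homEquiv_naturality_left_symm := fun {M' M N} f g => by
        refine ObjectProperty.hom_ext _ (NatTrans.ext (funext fun X => ?_))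
        rcases X with ⟨α⟩
        rfl
      homEquiv_naturality_right := fun {M N N'} g φ => by
        refine ObjectProperty.hom_ext _ (NatTrans.ext (funext fun X => ?_))
        cases X with
        | of α => rfl
        | infty => exact hom_ext_tgt ZG_sub _ _ }

instance jupperF_faithful : (jupperF FR Λ).Faithful where
  map_injective {N N'} f g h := by
    refine ObjectProperty.hom_ext _ (NatTrans.ext (funext fun X => ?_))
    rcases X with ⟨α⟩
    exact congrArg (fun (θ : (jupperF FR Λ).obj N ⟶ (jupperF FR Λ).obj N') =>
      θ.hom.app (OFF.of α)) h

instance jupperF_full : (jupperF FR Λ).Full where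
  map_surjective {N N'} θ := by
    refine ⟨ObjectProperty.homMk <| show N.obj ⟶ N'.obj from
      { app := fun X => match X with
          | FF.of α => θ.hom.app (OFF.of α)
        naturality := by
          rintro ⟨α⟩ ⟨β⟩ f
          exact θ.hom.naturality
            (offOf FR Λ f) }, ?_⟩
    refine ObjectProperty.hom_ext _ (NatTrans.ext (funext fun X => ?_))
    cases X with
    | of α => rfl
    | infty => exact hom_ext_tgt ZG_sub _ _
/-! ### The functor `j_!` -/

/-- Generators for `(j_! N)(∞)`. -/
abbrev JGen (N : Mod (FF FR Λ)) : Type u := Σ α : Λ, R × (N.obj.obj (FF.of α))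

/-- Relations for `(j_! N)(∞)`. -/
def JRelSet (N : Mod (FF FR Λ)) : Set (FreeAbelianGroup (JGen FR Λ N)) :=
  ({x | ∃ (α : Λ) (r r' : R) (m : N.obj.obj (FF.of α)),
    x = FreeAbelianGroup.of (⟨α, (r + r', m)⟩ : JGen FR Λ N) -
      FreeAbelianGroup.of (⟨α, (r, m)⟩ : JGen FR Λ N) -
      FreeAbelianGroup.of (⟨α, (r', m)⟩ : JGen FR Λ N)} ∪
  {x | ∃ (α : Λ) (r : R) (m m' : N.obj.obj (FF.of α)),
    x = FreeAbelianGroup.of (⟨α, (r, m + m')⟩ : JGen FR Λ N) -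
      FreeAbelianGroup.of (⟨α, (r, m)⟩ : JGen FR Λ N) -
      FreeAbelianGroup.of (⟨α, (r, m')⟩ : JGen FR Λ N)}) ∪
  {x | ∃ (α β : Λ) (f : (FF.of α : FF FR Λ) ⟶ FF.of β) (r : R) (m : N.obj.obj (FF.of α)),
    x = FreeAbelianGroup.of (⟨α, (r * f.1, m)⟩ : JGen FR Λ N) -
      FreeAbelianGroup.of (⟨β, (r, N.obj.map f m)⟩ : JGen FR Λ N)}

/-- The subgroup of relations. -/
def JRel (N : Mod (FF FR Λ)) : AddSubgroup (FreeAbelianGroup (JGen FR Λ N)) :=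
  AddSubgroup.closure (JRelSet FR Λ N)

/-- The value of `j_! N` at `∞`. -/
def Jinf (N : Mod (FF FR Λ)) : Type u :=
  FreeAbelianGroup (JGen FR Λ N) ⧸ JRel FR Λ N

instance (N : Mod (FF FR Λ)) : AddCommGroup (Jinf FR Λ N) :=
  inferInstanceAs (AddCommGroup (FreeAbelianGroup (JGen FR Λ N) ⧸ JRel FR Λ N))

/-- The class of a generator in `Jinf`. -/
def jgen (N : Mod (FF FR Λ)) (α : Λ) (r : R) (m : N.obj.obj (FF.of α)) : Jinf FR Λ N :=
  QuotientAddGroup.mk' (JRel FR Λ N) (FreeAbelianGroup.of ⟨α, (r, m)⟩)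

theorem jmk_eq_of_sub_mem (N : Mod (FF FR Λ)) {x y : FreeAbelianGroup (JGen FR Λ N)}
    (h : x - y ∈ JRel FR Λ N) :
    QuotientAddGroup.mk' (JRel FR Λ N) x = QuotientAddGroup.mk' (JRel FR Λ N) y := by
  refine (QuotientAddGroup.mk'_eq_mk' (JRel FR Λ N)).mpr ⟨y - x, ?_, by abel⟩
  have h2 := neg_mem h
  rwa [neg_sub] at h2

theorem jgen_add_left (N : Mod (FF FR Λ)) (α : Λ) (r r' : R) (m : N.obj.obj (FF.of α)) :
    jgen FR Λ N α (r + r') m = jgen FR Λ N α r m + jgen FR Λ N α r' m := by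
  have key := jmk_eq_of_sub_mem FR Λ N
    (x := FreeAbelianGroup.of (⟨α, (r + r', m)⟩ : JGen FR Λ N))
    (y := FreeAbelianGroup.of (⟨α, (r, m)⟩ : JGen FR Λ N) +
      FreeAbelianGroup.of (⟨α, (r', m)⟩ : JGen FR Λ N))
    (by
      rw [sub_add_eq_sub_sub]
      exact AddSubgroup.subset_closure (Or.inl (Or.inl ⟨α, r, r', m, rfl⟩)))
  exact key.trans (map_add _ _ _)

theorem jgen_add_right (N : Mod (FF FR Λ)) (α : Λ) (r : R) (m m' : N.obj.obj (FF.of α)) :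
    jgen FR Λ N α r (m + m') = jgen FR Λ N α r m + jgen FR Λ N α r m' := by
  have key := jmk_eq_of_sub_mem FR Λ N
    (x := FreeAbelianGroup.of (⟨α, (r, m + m')⟩ : JGen FR Λ N))
    (y := FreeAbelianGroup.of (⟨α, (r, m)⟩ : JGen FR Λ N) +
      FreeAbelianGroup.of (⟨α, (r, m')⟩ : JGen FR Λ N))
    (by
      rw [sub_add_eq_sub_sub]
      exact AddSubgroup.subset_closure (Or.inl (Or.inr ⟨α, r, m, m', rfl⟩)))
  exact key.trans (map_add _ _ _)

theorem jgen_rel (N : Mod (FF FR Λ)) {α β : Λ} (f : (FF.of α : FF FR Λ) ⟶ FF.of β)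
    (r : R) (m : N.obj.obj (FF.of α)) :
    jgen FR Λ N α (r * f.1) m = jgen FR Λ N β r (N.obj.map f m) := by
  refine jmk_eq_of_sub_mem FR Λ N ?_
  exact AddSubgroup.subset_closure (Or.inr ⟨α, β, f, r, m, rfl⟩)

theorem jgen_zero (N : Mod (FF FR Λ)) (α : Λ) (m : N.obj.obj (FF.of α)) :
    jgen FR Λ N α 0 m = 0 := by
  have h := jgen_add_left FR Λ N α 0 0 m
  rw [add_zero] at h
  exact left_eq_add.mp h

/-- Lift a function on generators to `Jinf`. -/
def jliftHom {N : Mod (FF FR Λ)} {A : Type u} [AddCommGroup A] (φ : JGen FR Λ N → A)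
    (h1 : ∀ (α : Λ) (r r' : R) (m : N.obj.obj (FF.of α)),
      φ ⟨α, (r + r', m)⟩ = φ ⟨α, (r, m)⟩ + φ ⟨α, (r', m)⟩)
    (h2 : ∀ (α : Λ) (r : R) (m m' : N.obj.obj (FF.of α)),
      φ ⟨α, (r, m + m')⟩ = φ ⟨α, (r, m)⟩ + φ ⟨α, (r, m')⟩)
    (h3 : ∀ (α β : Λ) (f : (FF.of α : FF FR Λ) ⟶ FF.of β) (r : R)
      (m : N.obj.obj (FF.of α)),
      φ ⟨α, (r * f.1, m)⟩ = φ ⟨β, (r, N.obj.map f m)⟩) :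
    Jinf FR Λ N →+ A :=
  QuotientAddGroup.lift (JRel FR Λ N) (FreeAbelianGroup.lift φ) (by
    rw [JRel, AddSubgroup.closure_le]
    rintro x ((⟨α, r, r', m, rfl⟩ | ⟨α, r, m, m', rfl⟩) | ⟨α, β, f, r, m, rfl⟩)
    · show FreeAbelianGroup.lift φ _ = 0
      rw [map_sub, map_sub, FreeAbelianGroup.lift_apply_of, FreeAbelianGroup.lift_apply_of,
        FreeAbelianGroup.lift_apply_of, h1 α r r' m]
      abel
    · show FreeAbelianGroup.lift φ _ = 0
      rw [map_sub, map_sub, FreeAbelianGroup.lift_apply_of, FreeAbelianGroup.lift_apply_of,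
        FreeAbelianGroup.lift_apply_of, h2 α r m m']
      abel
    · show FreeAbelianGroup.lift φ _ = 0
      rw [map_sub, FreeAbelianGroup.lift_apply_of, FreeAbelianGroup.lift_apply_of, h3 α β f r m]
      abel)

@[simp] theorem jliftHom_gen {N : Mod (FF FR Λ)} {A : Type u} [AddCommGroup A]
    (φ : JGen FR Λ N → A) (h1) (h2) (h3) (α : Λ) (r : R) (m : N.obj.obj (FF.of α)) :
    jliftHom FR Λ φ h1 h2 h3 (jgen FR Λ N α r m) = φ ⟨α, (r, m)⟩ := by
  show QuotientAddGroup.lift _ (FreeAbelianGroup.lift φ) _ _ = _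
  rw [jgen, QuotientAddGroup.mk'_apply, QuotientAddGroup.lift_mk, FreeAbelianGroup.lift_apply_of]

theorem jhom_ext {N : Mod (FF FR Λ)} {A : Type u} [AddCommGroup A]
    {f g : Jinf FR Λ N →+ A}
    (h : ∀ (α : Λ) (r : R) (m : N.obj.obj (FF.of α)),
      f (jgen FR Λ N α r m) = g (jgen FR Λ N α r m)) : f = g := by
  refine QuotientAddGroup.addMonoidHom_ext _ ?_
  refine FreeAbelianGroup.lift_ext _ _ ?_
  rintro ⟨α, r, m⟩
  exact h α r m

/-- The generator map as a morphism. -/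
def jgenHom (N : Mod (FF FR Λ)) (α : Λ) (r : R) :
    N.obj.obj (FF.of α) →+ Jinf FR Λ N :=
  AddMonoidHom.mk' (fun m => jgen FR Λ N α r m) (fun m m' => jgen_add_right FR Λ N α r m m')

@[simp] theorem jgenHom_apply (N : Mod (FF FR Λ)) (α : Λ) (r : R)
    (m : N.obj.obj (FF.of α)) : jgenHom FR Λ N α r m = jgen FR Λ N α r m := rfl

/-- The action of `s : R` (a morphism `∞ ⟶ ∞`) on `Jinf`. -/
def jsmul (N : Mod (FF FR Λ)) (s : R) : Jinf FR Λ N →+ Jinf FR Λ N :=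
  jliftHom FR Λ (fun p => jgen FR Λ N p.1 (s * p.2.1) p.2.2)
    (fun α r r' m => by
      show jgen FR Λ N α (s * (r + r')) m = jgen FR Λ N α (s * r) m + jgen FR Λ N α (s * r') m
      rw [mul_add]
      exact jgen_add_left FR Λ N α _ _ m)
    (fun α r m m' => jgen_add_right FR Λ N α _ m m')
    (fun α β f r m => by
      show jgen FR Λ N α (s * (r * f.1)) m = jgen FR Λ N β (s * r) (N.obj.map f m)
      rw [← mul_assoc]
      exact jgen_rel FR Λ N f _ m)

@[simp] theorem jsmul_gen (N : Mod (FF FR Λ)) (s : R) (α : Λ) (r : R)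
    (m : N.obj.obj (FF.of α)) :
    jsmul FR Λ N s (jgen FR Λ N α r m) = jgen FR Λ N α (s * r) m :=
  jliftHom_gen FR Λ _ _ _ _ α r m

/-- Category-hom versions. -/
def jgenHomC (N : Mod (FF FR Λ)) (α : Λ) (r : R) :
    N.obj.obj (FF.of α) ⟶ AddCommGrpCat.of (Jinf FR Λ N) :=
  AddCommGrpCat.ofHom (jgenHom FR Λ N α r)

def jsmulHomC (N : Mod (FF FR Λ)) (s : R) :
    AddCommGrpCat.of (Jinf FR Λ N) ⟶ AddCommGrpCat.of (Jinf FR Λ N) :=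
  AddCommGrpCat.ofHom (jsmul FR Λ N s)

@[simp] theorem jgenHomC_apply (N : Mod (FF FR Λ)) (α : Λ) (r : R)
    (m : N.obj.obj (FF.of α)) : jgenHomC FR Λ N α r m = jgen FR Λ N α r m := rfl

@[simp] theorem jsmulHomC_gen (N : Mod (FF FR Λ)) (s : R) (α : Λ) (r : R)
    (m : N.obj.obj (FF.of α)) :
    jsmulHomC FR Λ N s (jgen FR Λ N α r m) = jgen FR Λ N α (s * r) m :=
  jsmul_gen FR Λ N s α r m

theorem jhom_extC {N : Mod (FF FR Λ)} {A : AddCommGrpCat.{u}}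
    {f g : AddCommGrpCat.of (Jinf FR Λ N) ⟶ A}
    (h : ∀ (α : Λ) (r : R) (m : N.obj.obj (FF.of α)),
      f (jgen FR Λ N α r m) = g (jgen FR Λ N α r m)) : f = g :=
  ConcreteCategory.ext (jhom_ext FR Λ h)

/-- The underlying functor of `j_! N`. -/
def jbangObjFun (N : Mod (FF FR Λ)) : OFF FR Λ ⥤ AddCommGrpCat.{u} where
  obj X := match X with
    | .of α => N.obj.obj (FF.of α)
    | .infty => AddCommGrpCat.of (Jinf FR Λ N)
  map {X Y} f := match X, Y, f with
    | .of _, .of _, f => N.obj.map (ffOf FR Λ f)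
    | .of α, .infty, f => jgenHomC FR Λ N α f.1
    | .infty, .of _, _ => 0
    | .infty, .infty, f => jsmulHomC FR Λ N f.1
  map_id X := by
    cases X with
    | of α =>
        show N.obj.map (ffOf FR Λ (𝟙 (OFF.of α : OFF FR Λ))) = 𝟙 (N.obj.obj (FF.of α))
        rw [ffOf_id, N.obj.map_id]
    | infty =>
        show jsmulHomC FR Λ N ((𝟙 (OFF.infty : OFF FR Λ) : _ ⟶ _).1) =
          𝟙 (AddCommGrpCat.of (Jinf FR Λ N))
        refine jhom_extC FR Λ fun α r m => ?_
        rw [jsmulHomC_gen, show ((𝟙 (OFF.infty : OFF FR Λ) : _ ⟶ _).1 : R) = 1 from rfl,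
          one_mul]
        rfl
  map_comp {X Y Z} f g := by
    cases X <;> cases Y <;> cases Z
    case of.of.of =>
      show N.obj.map (ffOf FR Λ (f ≫ g)) = N.obj.map (ffOf FR Λ f) ≫ N.obj.map (ffOf FR Λ g)
      rw [ffOf_comp, N.obj.map_comp]
    case of.of.infty α β =>
      show jgenHomC FR Λ N α ((f ≫ g).1) = N.obj.map (ffOf FR Λ f) ≫ jgenHomC FR Λ N β g.1
      refine AddCommGrpCat.ext fun m => ?_
      show jgen FR Λ N α ((f ≫ g).1) m = jgen FR Λ N β g.1 (N.obj.map (ffOf FR Λ f) m)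
      rw [show ((f ≫ g).1 : R) = g.1 * (ffOf FR Λ f).1 from rfl]
      exact jgen_rel FR Λ N (ffOf FR Λ f) g.1 m
    case of.infty.of =>
      haveI := N.property
      have hfg : f ≫ g = 0 := by
        rw [show g = 0 from infty_to_of_eq_zero FR Λ g, comp_zero]
      show N.obj.map (ffOf FR Λ (f ≫ g)) = _ ≫ (0 : _ ⟶ _)
      rw [hfg, show ffOf FR Λ (0 : (OFF.of _ : OFF FR Λ) ⟶ OFF.of _) = 0 from rfl,
        N.obj.map_zero, Limits.comp_zero]
    case of.infty.infty α =>
      show jgenHomC FR Λ N α ((f ≫ g).1) = jgenHomC FR Λ N α f.1 ≫ jsmulHomC FR Λ N g.1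
      refine AddCommGrpCat.ext fun m => ?_
      show jgen FR Λ N α ((f ≫ g).1) m = jsmulHomC FR Λ N g.1 (jgen FR Λ N α f.1 m)
      rw [jsmulHomC_gen]
      rfl
    case infty.of.of =>
      show (0 : AddCommGrpCat.of (Jinf FR Λ N) ⟶ _) = (0 : _ ⟶ _) ≫ N.obj.map (ffOf FR Λ g)
      rw [Limits.zero_comp]
    case infty.of.infty α =>
      have hf : (f.1 : R) = 0 := AddSubgroup.mem_bot.mp f.2
      show jsmulHomC FR Λ N ((f ≫ g).1) = (0 : _ ⟶ N.obj.obj (FF.of α)) ≫ jgenHomC FR Λ N α g.1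
      rw [Limits.zero_comp]
      refine jhom_extC FR Λ fun β r m => ?_
      show jsmulHomC FR Λ N ((f ≫ g).1) (jgen FR Λ N β r m) = 0
      rw [jsmulHomC_gen, show ((f ≫ g).1 : R) = g.1 * f.1 from rfl, hf, mul_zero, zero_mul,
        jgen_zero]
    case infty.infty.of =>
      show (0 : _ ⟶ _) = jsmulHomC FR Λ N f.1 ≫ (0 : AddCommGrpCat.of (Jinf FR Λ N) ⟶ _)
      rw [Limits.comp_zero]
    case infty.infty.infty =>
      show jsmulHomC FR Λ N ((f ≫ g).1) = jsmulHomC FR Λ N f.1 ≫ jsmulHomC FR Λ N g.1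
      refine jhom_extC FR Λ fun α r m => ?_
      show jsmulHomC FR Λ N ((f ≫ g).1) (jgen FR Λ N α r m)
        = jsmulHomC FR Λ N g.1 (jsmulHomC FR Λ N f.1 (jgen FR Λ N α r m))
      rw [jsmulHomC_gen, jsmulHomC_gen, jsmulHomC_gen,
        show ((f ≫ g).1 : R) = g.1 * f.1 from rfl, mul_assoc]

theorem jbangObjFun_additive (N : Mod (FF FR Λ)) : (jbangObjFun FR Λ N).Additive := by
  haveI := N.property
  constructor
  intro X Y f g
  cases X <;> cases Y
  case of.of =>
    show N.obj.map (ffOf FR Λ (f + g)) = N.obj.map (ffOf FR Λ f) + N.obj.map (ffOf FR Λ g)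
    rw [ffOf_add, N.obj.map_add]
  case of.infty α =>
    show jgenHomC FR Λ N α ((f + g).1) = jgenHomC FR Λ N α f.1 + jgenHomC FR Λ N α g.1
    refine AddCommGrpCat.ext fun m => ?_
    show jgen FR Λ N α ((f + g).1) m = jgen FR Λ N α f.1 m + jgen FR Λ N α g.1 m
    rw [show ((f + g).1 : R) = f.1 + g.1 from rfl]
    exact jgen_add_left FR Λ N α f.1 g.1 m
  case infty.of =>
    show (0 : _ ⟶ _) = (0 : _ ⟶ _) + (0 : _ ⟶ _)
    exact (add_zero _).symm
  case infty.infty =>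
    show jsmulHomC FR Λ N ((f + g).1) = jsmulHomC FR Λ N f.1 + jsmulHomC FR Λ N g.1
    refine jhom_extC FR Λ fun α r m => ?_
    show jsmulHomC FR Λ N ((f + g).1) (jgen FR Λ N α r m) =
      jsmulHomC FR Λ N f.1 (jgen FR Λ N α r m) + jsmulHomC FR Λ N g.1 (jgen FR Λ N α r m)
    rw [jsmulHomC_gen, jsmulHomC_gen, jsmulHomC_gen,
      show ((f + g).1 : R) = f.1 + g.1 from rfl, add_mul]
    exact jgen_add_left FR Λ N α _ _ m

/-- The `∞`-component of `j_! ψ`. -/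
def jmapInf {N N' : Mod (FF FR Λ)} (ψ : N ⟶ N') : Jinf FR Λ N →+ Jinf FR Λ N' :=
  jliftHom FR Λ
    (fun p => jgen FR Λ N' p.1 p.2.1 (ψ.hom.app (FF.of p.1) p.2.2))
    (fun α r r' m => jgen_add_left FR Λ N' α r r' _)
    (fun α r m m' => by
      show jgen FR Λ N' α r (ψ.hom.app (FF.of α) (m + m')) = _
      rw [map_add]
      exact jgen_add_right FR Λ N' α r _ _)
    (fun α β f r m => by
      have h2 : ψ.hom.app (FF.of β) (N.obj.map f m) =
          N'.obj.map f (ψ.hom.app (FF.of α) m) :=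
        ConcreteCategory.congr_hom (ψ.hom.naturality f) m
      show jgen FR Λ N' α (r * f.1) (ψ.hom.app (FF.of α) m) =
        jgen FR Λ N' β r (ψ.hom.app (FF.of β) (N.obj.map f m))
      rw [jgen_rel FR Λ N' f r, h2])

/-- The `∞`-component of `j_! ψ`, as a category morphism. -/
def jmapInfC {N N' : Mod (FF FR Λ)} (ψ : N ⟶ N') :
    AddCommGrpCat.of (Jinf FR Λ N) ⟶ AddCommGrpCat.of (Jinf FR Λ N') :=
  AddCommGrpCat.ofHom (jmapInf FR Λ ψ)

@[simp] theorem jmapInf_gen {N N' : Mod (FF FR Λ)} (ψ : N ⟶ N') (α : Λ) (r : R)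
    (m : N.obj.obj (FF.of α)) :
    jmapInf FR Λ ψ (jgen FR Λ N α r m) =
      jgen FR Λ N' α r (ψ.hom.app (FF.of α) m) := by
  rw [jmapInf]
  exact jliftHom_gen FR Λ _ _ _ _ α r m

@[simp] theorem jmapInfC_gen {N N' : Mod (FF FR Λ)} (ψ : N ⟶ N') (α : Λ) (r : R)
    (m : N.obj.obj (FF.of α)) :
    jmapInfC FR Λ ψ (jgen FR Λ N α r m) =
      jgen FR Λ N' α r (ψ.hom.app (FF.of α) m) :=
  jmapInf_gen FR Λ ψ α r m

/-- The functor `j_! : Mod (FF_Λ R) ⥤ Mod (oFF_Λ R)`. -/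
def jbangF : Mod (FF FR Λ) ⥤ Mod (OFF FR Λ) where
  obj N := ⟨jbangObjFun FR Λ N, jbangObjFun_additive FR Λ N⟩
  map {N N'} ψ :=
    ObjectProperty.homMk <| show jbangObjFun FR Λ N ⟶ jbangObjFun FR Λ N' from
    { app := fun X => match X with
        | .of α => ψ.hom.app (FF.of α)
        | .infty => jmapInfC FR Λ ψ
      naturality := by
        intro X Y f
        cases X <;> cases Y
        case of.of => exact ψ.hom.naturality (ffOf FR Λ f)
        case of.infty α =>
          show jgenHomC FR Λ N α f.1 ≫ jmapInfC FR Λ ψ =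
            ψ.hom.app (FF.of α) ≫ jgenHomC FR Λ N' α f.1
          refine AddCommGrpCat.ext fun m => ?_
          show jmapInfC FR Λ ψ (jgen FR Λ N α f.1 m) =
            jgen FR Λ N' α f.1 (ψ.hom.app (FF.of α) m)
          rw [jmapInfC_gen]
        case infty.of =>
          show (0 : _ ⟶ _) ≫ _ = _ ≫ (0 : _ ⟶ _)
          exact Limits.zero_comp.trans Limits.comp_zero.symm
        case infty.infty =>
          show jsmulHomC FR Λ N f.1 ≫ jmapInfC FR Λ ψ =
            jmapInfC FR Λ ψ ≫ jsmulHomC FR Λ N' f.1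
          refine jhom_extC FR Λ fun α r m => ?_
          show jmapInfC FR Λ ψ (jsmulHomC FR Λ N f.1 (jgen FR Λ N α r m)) =
            jsmulHomC FR Λ N' f.1 (jmapInfC FR Λ ψ (jgen FR Λ N α r m))
          rw [jsmulHomC_gen, jmapInfC_gen, jmapInfC_gen, jsmulHomC_gen] }
  map_id N := by
    refine ObjectProperty.hom_ext _ (NatTrans.ext (funext fun X => ?_))
    cases X with
    | of α => rfl
    | infty =>
        show jmapInfC FR Λ (𝟙 N) = 𝟙 (AddCommGrpCat.of (Jinf FR Λ N))
        refine jhom_extC FR Λ fun α r m => ?_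
        rw [jmapInfC_gen]
        rfl
  map_comp {N N' N''} f g := by
    refine ObjectProperty.hom_ext _ (NatTrans.ext (funext fun X => ?_))
    cases X with
    | of α => rfl
    | infty =>
        show jmapInfC FR Λ (f ≫ g) = jmapInfC FR Λ f ≫ jmapInfC FR Λ g
        refine jhom_extC FR Λ fun α r m => ?_
        show jmapInfC FR Λ (f ≫ g) (jgen FR Λ N α r m) =
          jmapInfC FR Λ g (jmapInfC FR Λ f (jgen FR Λ N α r m))
        rw [jmapInfC_gen, jmapInfC_gen, jmapInfC_gen]
        rfl
/-! ### The adjunction `j_! ⊣ j^*` -/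

/-- The `∞`-component of the adjunct of `η : N ⟶ j^* M`. -/
def jcounitInf {N : Mod (FF FR Λ)} {M : Mod (OFF FR Λ)} (η : N ⟶ (jStar FR Λ).obj M) :
    Jinf FR Λ N →+ M.obj.obj OFF.infty :=
  haveI := M.property
  jliftHom FR Λ
    (fun p => M.obj.map (ofToInf FR Λ p.1 p.2.1)
      (η.hom.app (FF.of p.1) p.2.2))
    (fun α r r' m => by
      show M.obj.map (ofToInf FR Λ α (r + r'))
          (η.hom.app (FF.of α) m) = _
      rw [show ofToInf FR Λ α (r + r') = ofToInf FR Λ α r + ofToInf FR Λ α r'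
        from Subtype.ext rfl, M.obj.map_add]
      rfl)
    (fun α r m m' => by
      show M.obj.map (ofToInf FR Λ α r)
          (η.hom.app (FF.of α) (m + m')) = _
      rw [map_add]
      exact map_add _ _ _)
    (fun α β f r m => by
      have h2 : η.hom.app (FF.of β) (N.obj.map f m) =
          M.obj.map (offOf FR Λ f)
            (η.hom.app (FF.of α) m) :=
        ConcreteCategory.congr_hom (η.hom.naturality f) m
      show M.obj.map (ofToInf FR Λ α (r * f.1))
          (η.hom.app (FF.of α) m) =
        M.obj.map (ofToInf FR Λ β r)
          (η.hom.app (FF.of β) (N.obj.map f m))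
      rw [h2, show ofToInf FR Λ α (r * f.1) = offOf FR Λ f ≫ ofToInf FR Λ β r
        from Subtype.ext rfl, M.obj.map_comp]
      rfl)

/-- The `∞`-component of the adjunct, as a category morphism. -/
def jcounitInfC {N : Mod (FF FR Λ)} {M : Mod (OFF FR Λ)} (η : N ⟶ (jStar FR Λ).obj M) :
    AddCommGrpCat.of (Jinf FR Λ N) ⟶ M.obj.obj OFF.infty :=
  AddCommGrpCat.ofHom (jcounitInf FR Λ η)

@[simp] theorem jcounitInf_gen {N : Mod (FF FR Λ)} {M : Mod (OFF FR Λ)}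
    (η : N ⟶ (jStar FR Λ).obj M) (α : Λ) (r : R) (m : N.obj.obj (FF.of α)) :
    jcounitInf FR Λ η (jgen FR Λ N α r m) =
      M.obj.map (ofToInf FR Λ α r)
        (η.hom.app (FF.of α) m) := by
  rw [jcounitInf]
  exact jliftHom_gen FR Λ _ _ _ _ α r m

@[simp] theorem jcounitInfC_gen {N : Mod (FF FR Λ)} {M : Mod (OFF FR Λ)}
    (η : N ⟶ (jStar FR Λ).obj M) (α : Λ) (r : R) (m : N.obj.obj (FF.of α)) :
    jcounitInfC FR Λ η (jgen FR Λ N α r m) =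
      M.obj.map (ofToInf FR Λ α r)
        (η.hom.app (FF.of α) m) :=
  jcounitInf_gen FR Λ η α r m

/-- The adjunct `j_! N ⟶ M` of `η : N ⟶ j^* M`. -/
def jbangAdjunct {N : Mod (FF FR Λ)} {M : Mod (OFF FR Λ)} (η : N ⟶ (jStar FR Λ).obj M) :
    jbangObjFun FR Λ N ⟶ M.obj where
  app X := match X with
    | .of α => η.hom.app (FF.of α)
    | .infty => jcounitInfC FR Λ η
  naturality {X Y} f := by
    cases X <;> cases Y
    case of.of => exact η.hom.naturality (ffOf FR Λ f)
    case of.infty α =>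
      show jgenHomC FR Λ N α f.1 ≫ jcounitInfC FR Λ η =
        η.hom.app (FF.of α) ≫ M.obj.map f
      refine AddCommGrpCat.ext fun m => ?_
      show jcounitInfC FR Λ η (jgen FR Λ N α f.1 m) =
        M.obj.map f (η.hom.app (FF.of α) m)
      rw [jcounitInfC_gen, ofToInf_eq FR Λ f]
    case infty.of β =>
      haveI := M.property
      show (0 : _ ⟶ _) ≫ _ = jcounitInfC FR Λ η ≫ M.obj.map f
      rw [show f = 0 from infty_to_of_eq_zero FR Λ f, M.obj.map_zero, Limits.zero_comp,
        Limits.comp_zero]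
    case infty.infty =>
      show jsmulHomC FR Λ N f.1 ≫ jcounitInfC FR Λ η = jcounitInfC FR Λ η ≫ M.obj.map f
      refine jhom_extC FR Λ fun α r m => ?_
      show jcounitInfC FR Λ η (jsmulHomC FR Λ N f.1 (jgen FR Λ N α r m)) =
        M.obj.map f (jcounitInfC FR Λ η (jgen FR Λ N α r m))
      rw [jsmulHomC_gen, jcounitInfC_gen, jcounitInfC_gen,
        show ofToInf FR Λ α (f.1 * r) = ofToInf FR Λ α r ≫ f from Subtype.ext rfl,
        M.obj.map_comp]
      rfl

/-- The adjunction `j_! ⊣ j^*`. -/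
def jbangAdj : jbangF FR Λ ⊣ jStar FR Λ :=
  Adjunction.mkOfHomEquiv
    { homEquiv := fun N M =>
      { toFun := fun θ =>
          ObjectProperty.homMk <| show N.obj ⟶ jF FR Λ ⋙ M.obj from
          { app := fun X => match X with
              | FF.of α => θ.hom.app (OFF.of α)
            naturality := by
              rintro ⟨α⟩ ⟨β⟩ f
              exact θ.hom.naturality (offOf FR Λ f) }
        invFun := fun η => ObjectProperty.homMk <| show jbangObjFun FR Λ N ⟶ M.obj from jbangAdjunct FR Λ η
        left_inv := fun θ => by
          refine ObjectProperty.hom_ext _ (NatTrans.ext (funext fun X => ?_))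
          cases X with
          | of α => rfl
          | infty =>
              refine jhom_extC FR Λ fun α r m => ?_
              show jcounitInfC FR Λ _ (jgen FR Λ N α r m) =
                θ.hom.app OFF.infty (jgen FR Λ N α r m)
              rw [jcounitInfC_gen]
              exact (ConcreteCategory.congr_hom
                (θ.hom.naturality
                  (ofToInf FR Λ α r)) m).symm
        right_inv := fun η => by
          refine ObjectProperty.hom_ext _ (NatTrans.ext (funext fun X => ?_))
          rcases X with ⟨α⟩
          rfl }
      homEquiv_naturality_left_symm := fun {N' N M} f g => by
        refine ObjectProperty.hom_ext _ (NatTrans.ext (funext fun X => ?_))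
        cases X with
        | of α => rfl
        | infty =>
            refine jhom_extC FR Λ fun α r m => ?_
            show jcounitInfC FR Λ (f ≫ g) (jgen FR Λ N' α r m) =
              jcounitInfC FR Λ g (jmapInfC FR Λ f (jgen FR Λ N' α r m))
            rw [jcounitInfC_gen, jmapInfC_gen, jcounitInfC_gen]
            rfl
      homEquiv_naturality_right := fun {N M M'} g φ => by
        refine ObjectProperty.hom_ext _ (NatTrans.ext (funext fun X => ?_))
        rcases X with ⟨α⟩
        rfl }

instance jbangF_faithful : (jbangF FR Λ).Faithful where
  map_injective {N N'} ψ ψ' h := by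
    refine ObjectProperty.hom_ext _ (NatTrans.ext (funext fun X => ?_))
    rcases X with ⟨α⟩
    exact congrArg
      (fun (θ : (jbangF FR Λ).obj N ⟶ (jbangF FR Λ).obj N') => θ.hom.app (OFF.of α)) h

instance jbangF_full : (jbangF FR Λ).Full where
  map_surjective {N N'} φ := by
    refine ⟨ObjectProperty.homMk <| show N.obj ⟶ N'.obj from
      { app := fun X => match X with
          | FF.of α =>
              φ.hom.app (OFF.of α)
        naturality := by
          rintro ⟨α⟩ ⟨β⟩ f
          exact φ.hom.naturality
            (offOf FR Λ f) }, ?_⟩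
    refine ObjectProperty.hom_ext _ (NatTrans.ext (funext fun X => ?_))
    cases X with
    | of α => rfl
    | infty =>
        refine jhom_extC FR Λ fun α r m => ?_
        show jmapInfC FR Λ _ (jgen FR Λ N α r m) =
          φ.hom.app OFF.infty
            (jgen FR Λ N α r m)
        rw [jmapInfC_gen]
        exact (ConcreteCategory.congr_hom
          (φ.hom.naturality
            (ofToInf FR Λ α r)) m).symm

/-! ### Essential image of `i_*` -/

/-- The zero natural transformation. -/
def zeroTransFF (F G : FF FR Λ ⥤ AddCommGrpCat.{u}) : F ⟶ G where
  app _ := 0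
  naturality := by
    intro X Y f
    rw [Limits.comp_zero, Limits.zero_comp]

theorem isZero_modFF (N : Mod (FF FR Λ))
    (h : ∀ (α : Λ) (x y : N.obj.obj (FF.of α)), x = y) : IsZero N := by
  constructor
  · intro P
    refine ⟨⟨⟨ObjectProperty.homMk (zeroTransFF FR Λ N.obj P.obj)⟩, fun η => ?_⟩⟩
    refine ObjectProperty.hom_ext _ (NatTrans.ext (funext fun X => ?_))
    rcases X with ⟨α⟩
    exact hom_ext_src (h α) _ _
  · intro P
    refine ⟨⟨⟨ObjectProperty.homMk (zeroTransFF FR Λ P.obj N.obj)⟩, fun η => ?_⟩⟩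
    refine ObjectProperty.hom_ext _ (NatTrans.ext (funext fun X => ?_))
    rcases X with ⟨α⟩
    exact hom_ext_tgt (h α) _ _

theorem vals_eq_of_isZero (M : Mod (OFF FR Λ)) (h : IsZero ((jStar FR Λ).obj M)) :
    ∀ (α : Λ) (x y : M.obj.obj (OFF.of α)), x = y := by
  intro α x y
  have hu : 𝟙 ((jStar FR Λ).obj M) =
      (show (jStar FR Λ).obj M ⟶ (jStar FR Λ).obj M from ObjectProperty.homMk <|
        zeroTransFF FR Λ (jF FR Λ ⋙ M.obj) (jF FR Λ ⋙ M.obj)) :=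
    h.eq_of_src _ _
  have happ := congrArg
    (fun (θ : (jStar FR Λ).obj M ⟶ (jStar FR Λ).obj M) => θ.hom.app (FF.of α)) hu
  have hx : x = 0 := ConcreteCategory.congr_hom happ x
  have hy : y = 0 := ConcreteCategory.congr_hom happ y
  rw [hx, hy]

/-- The comparison `i_* i^! M ⟶ M`. -/
def istarIupperHom (M : Mod (OFF FR Λ))
    (h : ∀ (α : Λ) (x y : M.obj.obj (OFF.of α)), x = y) :
    istarObjFun FR Λ ((iupperF FR Λ).obj M) ⟶ M.obj where
  app X := match X with
    | .of α => 0
    | .infty => AddCommGrpCat.ofHom <|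
        AddMonoidHom.id (M.obj.obj OFF.infty)
  naturality {X Y} f := by
    cases X <;> cases Y
    case of.of => exact hom_ext_tgt (h _) _ _
    case of.infty => exact hom_ext_src ZG_sub _ _
    case infty.of => exact hom_ext_tgt (h _) _ _
    case infty.infty =>
      refine AddCommGrpCat.ext fun (v : M.obj.obj OFF.infty) => ?_
      show M.obj.map (infHom FR Λ f.1) v = M.obj.map f v
      rw [infHom_eq]

/-- The comparison `M ⟶ i_* i^! M`. -/
def istarIupperInv (M : Mod (OFF FR Λ))
    (h : ∀ (α : Λ) (x y : M.obj.obj (OFF.of α)), x = y) :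
    M.obj ⟶ istarObjFun FR Λ ((iupperF FR Λ).obj M) where
  app X := match X with
    | .of α => 0
    | .infty => AddCommGrpCat.ofHom <|
        AddMonoidHom.id (M.obj.obj OFF.infty)
  naturality {X Y} f := by
    cases X <;> cases Y
    case of.of => exact hom_ext_src (h _) _ _
    case of.infty => exact hom_ext_src (h _) _ _
    case infty.of => exact hom_ext_tgt ZG_sub _ _
    case infty.infty =>
      refine AddCommGrpCat.ext fun (v : M.obj.obj OFF.infty) => ?_
      show M.obj.map f v = M.obj.map (infHom FR Λ f.1) v
      rw [infHom_eq]

/-- If `j^* M` vanishes then `M` lies in the image of `i_*`. -/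
def istarIupperIso (M : Mod (OFF FR Λ))
    (h : ∀ (α : Λ) (x y : M.obj.obj (OFF.of α)), x = y) :
    (istarF FR Λ).obj ((iupperF FR Λ).obj M) ≅ M where
  hom := show (istarF FR Λ).obj ((iupperF FR Λ).obj M) ⟶ M from ObjectProperty.homMk (istarIupperHom FR Λ M h)
  inv := show M ⟶ (istarF FR Λ).obj ((iupperF FR Λ).obj M) from ObjectProperty.homMk (istarIupperInv FR Λ M h)
  hom_inv_id := by
    refine ObjectProperty.hom_ext _ (NatTrans.ext (funext fun X => ?_))
    cases X with
    | of α => exact hom_ext_tgt ZG_sub _ _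
    | infty => rfl
  inv_hom_id := by
    refine ObjectProperty.hom_ext _ (NatTrans.ext (funext fun X => ?_))
    cases X with
    | of α => exact hom_ext_tgt (h α) _ _
    | infty => rfl

theorem istar_essImage_iff (M : Mod (OFF FR Λ)) :
    (istarF FR Λ).essImage M ↔ IsZero ((jStar FR Λ).obj M) := by
  constructor
  · rintro ⟨V, ⟨e⟩⟩
    have hz : IsZero ((jStar FR Λ).obj ((istarF FR Λ).obj V)) := by
      refine isZero_modFF FR Λ _ fun α x y => ?_
      exact ZG_sub x y
    exact hz.of_iso ((jStar FR Λ).mapIso e.symm)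
  · intro h
    exact ⟨(iupperF FR Λ).obj M, ⟨istarIupperIso FR Λ M (vals_eq_of_isZero FR Λ M h)⟩⟩

end RecollementAux

section Statements

variable {Γ : Type u} [Group Γ] [PartialOrder Γ]
  [CovariantClass Γ Γ (· * ·) (· ≤ ·)] [CovariantClass Γ Γ (Function.swap (· * ·)) (· ≤ ·)]
  {R : Type u} [Ring R]

/-- The functors `i_* : Mod R ⥤ Mod oFF_Λ R` (with `(i_*V)(λ) = 0` for
`λ ∈ Λ` and `(i_*V)(∞) = V`), the restriction `j^* : Mod oFF_Λ R ⥤ Mod FF_Λ R`, the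
functor `j_* : Mod FF_Λ R ⥤ Mod oFF_Λ R` (with `(j_*M)(λ) = M(λ)` and `(j_*M)(∞) = 0`)
and `i^! : Mod oFF_Λ R ⥤ Mod R` (with `i^!(M) = M(∞)`) fit into a recollement of abelian
categories: `j^*` admits a left adjoint `j_!` and the right adjoint `j_*`, with `j_!` and
`j_*` fully faithful; `i_*` is fully faithful and admits a left adjoint `i^*` and the
right adjoint `i^!`; and the essential image of `i_*` equals the full subcategory of
those `M` with `j^*(M) = 0`. -/
theorem statement_2 (FR : RingFiltration Γ R) (Λ : Set Γ) :
    ∃ (istar : ModuleCat.{u} R ⥤ Mod (OFF FR Λ))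
      (iupper : Mod (OFF FR Λ) ⥤ ModuleCat.{u} R)   -- i^!
      (istarL : Mod (OFF FR Λ) ⥤ ModuleCat.{u} R)   -- i^*
      (jbang : Mod (FF FR Λ) ⥤ Mod (OFF FR Λ))      -- j_!
      (jupper : Mod (FF FR Λ) ⥤ Mod (OFF FR Λ)),    -- j_*
      -- object formulas for i_*
      (∀ (V : ModuleCat.{u} R) (α : Λ), IsZero ((istar.obj V).obj.obj (OFF.of α))) ∧
      (∀ V : ModuleCat.{u} R, Nonempty ((istar.obj V).obj.obj OFF.infty ≅ AddCommGrpCat.of V)) ∧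
      -- object formulas for j_*
      (∀ (N : Mod (FF FR Λ)) (α : Λ),
        Nonempty ((jupper.obj N).obj.obj (OFF.of α) ≅ N.obj.obj (FF.of α))) ∧
      (∀ N : Mod (FF FR Λ), IsZero ((jupper.obj N).obj.obj OFF.infty)) ∧
      -- object formula for i^!
      (∀ M : Mod (OFF FR Λ), Nonempty (AddCommGrpCat.of (iupper.obj M) ≅ M.obj.obj OFF.infty)) ∧
      -- the two adjoint triples
      Nonempty (jbang ⊣ jStar FR Λ) ∧
      Nonempty (jStar FR Λ ⊣ jupper) ∧
      Nonempty (istarL ⊣ istar) ∧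
      Nonempty (istar ⊣ iupper) ∧
      -- full faithfulness
      jbang.Full ∧ jbang.Faithful ∧
      jupper.Full ∧ jupper.Faithful ∧
      istar.Full ∧ istar.Faithful ∧
      -- essential image of `i_*` is the kernel of `j^*`
      (∀ M : Mod (OFF FR Λ), istar.essImage M ↔ IsZero ((jStar FR Λ).obj M)) := by
  refine ⟨istarF FR Λ, iupperF FR Λ, istarLF FR Λ, jbangF FR Λ, jupperF FR Λ,
    fun V α => ?_, fun V => ⟨Iso.refl _⟩, fun N α => ⟨Iso.refl _⟩, fun N => ?_,
    fun M => ⟨Iso.refl _⟩, ⟨jbangAdj FR Λ⟩, ⟨jStarJupperAdj FR Λ⟩, ⟨istarLAdj FR Λ⟩,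
    ⟨istarIupperAdj FR Λ⟩, jbangF_full FR Λ, jbangF_faithful FR Λ, jupperF_full FR Λ,
    jupperF_faithful FR Λ, istarF_full FR Λ, istarF_faithful FR Λ,
    fun M => istar_essImage_iff FR Λ M⟩
  · exact ZG_isZero
  · exact ZG_isZero

end Statements

end GliderPaper
end
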